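/- Let $V$ be a finite set and let $\{R^z\}_{z \in Z}$ be a finite family of rate matrices on $V$ (off-diagonal entries nonnegative, rows summing to zero), together with strictly positive marginal densities $p^z$ on $V$ and weights $w_z \ge 0$ summing over $z$ (for each $x$) as a conditional distribution $w_z(x)$ with $\sum_z w_z(x) = 1$. Suppose for each $z$ the pair $(R^{F,z}, R^{B,z})$ satisfies the detailed-reversal relation $p^z(x) R^{F,z}(x,y) = p^z(y) R^{B,z}(y,x)$ for all $x \neq y$, and suppose $w_z(x) = \alpha_z p^z(x)/p(x)$ where $p(x) = \sum_z \alpha_z p^z(x)$ for nonnegative weights $\alpha_z$ summing to 1. Define the marginal rate matrices $R^F(x,y) = \sum_z w_z(x) R^{F,z}(x,y)$ and $R^B(x,y) = \sum_z w_z(x) R^{B,z}(x,y)$ for $x \neq y$. Then $p(x) R^F(x,y) = p(y) R^B(y,x)$ for all $x \neq y$. -/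

import Mathlib

open Finset

/-- Marginalization over the posterior of the conditioning variable preserves
the detailed time-reversal relation: if for each `z` the rate matrices
`R^{F,z}, R^{B,z}` are in detailed reversal with respect to `p^z`, then the
marginal rates `R^F(x,y) = ∑_z w_z(x) R^{F,z}(x,y)` and
`R^B(x,y) = ∑_z w_z(x) R^{B,z}(x,y)`, with posterior weights
`w_z(x) = α_z p^z(x)/p(x)` and mixture `p = ∑_z α_z p^z`, satisfy
`p(x) R^F(x,y) = p(y) R^B(y,x)` for `x ≠ y`. -/
theorem stmt_18 {V Z : Type*} [Fintype V] [Fintype Z] [DecidableEq V]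
    (RF RB : Z → V → V → ℝ) (p : Z → V → ℝ) (α : Z → ℝ)
    (hRFnn : ∀ z x y, x ≠ y → 0 ≤ RF z x y)
    (hRFrow : ∀ z x, ∑ y, RF z x y = 0)
    (hRBnn : ∀ z x y, x ≠ y → 0 ≤ RB z x y)
    (hRBrow : ∀ z x, ∑ y, RB z x y = 0)
    (hp : ∀ z x, 0 < p z x)
    (hα : ∀ z, 0 ≤ α z) (hαsum : ∑ z, α z = 1)
    (hrev : ∀ z x y, x ≠ y → p z x * RF z x y = p z y * RB z y x) :
    ∀ x y, x ≠ y →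
      (∑ z, α z * p z x) *
          (∑ z, (α z * p z x / ∑ z', α z' * p z' x) * RF z x y) =
        (∑ z, α z * p z y) *
          (∑ z, (α z * p z y / ∑ z', α z' * p z' y) * RB z y x) := by
  intro x y hxy
  have hz0 : ∃ z : Z, 0 < α z := by
    by_contra h
    push_neg at h
    have : ∑ z, α z = 0 := Finset.sum_eq_zero fun z _ => le_antisymm (h z) (hα z)
    simp [this] at hαsum
  obtain ⟨z0, hz0⟩ := hz0
  have hP : ∀ v : V, 0 < ∑ z, α z * p z v := fun v =>
    Finset.sum_pos' (fun z _ => mul_nonneg (hα z) (hp z v).le)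
      ⟨z0, Finset.mem_univ z0, mul_pos hz0 (hp z0 v)⟩
  have key : ∀ (v : V) (R : Z → V → V → ℝ) (a b : V),
      (∑ z, α z * p z v) * (∑ z, (α z * p z v / ∑ z', α z' * p z' v) * R z a b)
        = ∑ z, α z * p z v * R z a b := by
    intro v R a b
    rw [Finset.mul_sum]
    refine Finset.sum_congr rfl fun z _ => ?_
    field_simp
    rw [div_eq_iff (hP v).ne']; ring
  rw [key, key]
  exact Finset.sum_congr rfl fun z _ => by
    rw [mul_assoc, mul_assoc, hrev z x y hxy]
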